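/- Let n ≥ 1 be an integer, 0 < α < 1 and γ > 0 real parameters, and let ℓ : Fin n → ℝ satisfy 0 ≤ ℓ j ≤ 1 for every j. Let n_S be an integer with 1 ≤ n_S ≤ n and n_S ≥ √n · √((−log(α/2)) / (2 γ²)). Let S be a uniformly random n_S-element subset of Fin n (uniform distribution over all subsets of cardinality n_S) and define L = (1/n_S) Σ_{j ∈ S} ℓ j. Then P(|L − E[L]| ≥ γ) ≤ α. -/

import Mathlib

open Real Finset
open scoped Classical

lemma two_point (p : ℝ) (hp0 : 0 ≤ p) (hp1 : p ≤ 1) (u : ℝ) :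
    (1 - p) * Real.exp (-(p * u)) + p * Real.exp ((1 - p) * u) ≤ Real.exp (u ^ 2 / 8) := by
  set D : ℝ → ℝ := fun v => 1 - p + p * Real.exp v with hD
  have hDpos : ∀ v, 0 < D v := by
    intro v
    rcases eq_or_lt_of_le hp0 with h | h
    · simp only [hD, ← h]; norm_num
    · have h1 : 0 < p * Real.exp v := mul_pos h (Real.exp_pos v)
      simp only [hD]; linarith
  -- G v = v^2/8 + p*v - log (D v), show G u ≥ 0
  set G : ℝ → ℝ := fun v => v ^ 2 / 8 + p * v - Real.log (D v) with hG
  set G' : ℝ → ℝ := fun v => v / 4 + p - p * Real.exp v / D v with hG'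
  have hDdv : ∀ v, HasDerivAt D (p * Real.exp v) v := by
    intro v
    exact ((Real.hasDerivAt_exp v).const_mul p).const_add (1 - p)
  have hGdv : ∀ v, HasDerivAt G (G' v) v := by
    intro v
    have hlog : HasDerivAt (fun v => Real.log (D v)) (p * Real.exp v / D v) v :=
      (hDdv v).log (hDpos v).ne'
    have h1 : HasDerivAt (fun v : ℝ => v ^ 2 / 8 + p * v) (v / 4 + p) v := by
      have := ((hasDerivAt_pow 2 v).div_const 8).add ((hasDerivAt_id v).const_mul p)
      exact this.congr_deriv (by ring)
    exact h1.sub hlog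
  have hG'dv : ∀ v, HasDerivAt G' (1 / 4 - p * (1 - p) * Real.exp v / (D v) ^ 2) v := by
    intro v
    have hq : HasDerivAt (fun v => p * Real.exp v / D v)
        ((p * Real.exp v * D v - p * Real.exp v * (p * Real.exp v)) / (D v) ^ 2) v :=
      ((Real.hasDerivAt_exp v).const_mul p).div (hDdv v) (hDpos v).ne'
    have h1 : HasDerivAt (fun v : ℝ => v / 4 + p) (1 / 4) v := by
      simpa using ((hasDerivAt_id v).div_const 4).add_const p
    have := h1.sub hq
    refine this.congr_deriv ?_
    have : D v = 1 - p + p * Real.exp v := rfl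
    rw [this]
    ring
  have hG'nonneg : ∀ v, 0 ≤ 1 / 4 - p * (1 - p) * Real.exp v / (D v) ^ 2 := by
    intro v
    rw [sub_nonneg, div_le_iff₀ (pow_pos (hDpos v) 2)]
    have key : 0 ≤ ((1 - p) - p * Real.exp v) ^ 2 := sq_nonneg _
    have : D v = 1 - p + p * Real.exp v := rfl
    nlinarith [Real.exp_pos v, mul_nonneg hp0 (Real.exp_nonneg v)]
  have hG'mono : Monotone G' := monotone_of_hasDerivAt_nonneg hG'dv fun v => hG'nonneg v
  have hG'0 : G' 0 = 0 := by
    simp only [hG', hD]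
    rw [Real.exp_zero]
    field_simp
    ring
  have hG0 : G 0 = 0 := by
    simp [hG, hD, Real.exp_zero]
  have hGnonneg : 0 ≤ G u := by
    rcases le_total 0 u with h | h
    · have hmono : MonotoneOn G (Set.Ici 0) := by
        apply monotoneOn_of_hasDerivWithinAt_nonneg (convex_Ici 0)
          (fun v _ => (hGdv v).continuousAt.continuousWithinAt)
          (fun v _ => (hGdv v).hasDerivWithinAt)
        intro v hv
        rw [interior_Ici] at hv
        rw [← hG'0]
        exact hG'mono (le_of_lt hv)
      have := hmono (Set.self_mem_Ici) (Set.mem_Ici.mpr h) h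
      linarith [hG0 ▸ this]
    · have hanti : AntitoneOn G (Set.Iic 0) := by
        apply antitoneOn_of_hasDerivWithinAt_nonpos (convex_Iic 0)
          (fun v _ => (hGdv v).continuousAt.continuousWithinAt)
          (fun v _ => (hGdv v).hasDerivWithinAt)
        intro v hv
        rw [interior_Iic] at hv
        rw [← hG'0]
        exact hG'mono (le_of_lt hv)
      have := hanti (Set.mem_Iic.mpr h) (Set.self_mem_Iic) h
      linarith [hG0 ▸ this]
  -- conclude
  have hlogD : Real.log (D u) ≤ u ^ 2 / 8 + p * u := by
    simp only [hG] at hGnonneg; linarith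
  have hDle : D u ≤ Real.exp (u ^ 2 / 8 + p * u) := by
    calc D u = Real.exp (Real.log (D u)) := (Real.exp_log (hDpos u)).symm
    _ ≤ _ := Real.exp_le_exp.mpr hlogD
  calc (1 - p) * Real.exp (-(p * u)) + p * Real.exp ((1 - p) * u)
      = Real.exp (-(p * u)) * D u := by
        simp only [hD]
        rw [show (1-p)*u = -(p*u)+u by ring, Real.exp_add]
        ring
    _ ≤ Real.exp (-(p * u)) * Real.exp (u ^ 2 / 8 + p * u) := by
        exact mul_le_mul_of_nonneg_left hDle (Real.exp_nonneg _)
    _ = Real.exp (u ^ 2 / 8) := by rw [← Real.exp_add]; ring_nf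

lemma mgf_wor {ι : Type*} [DecidableEq ι] (x : ι → ℝ) (t : ℝ) :
    ∀ (u : Finset ι), (∀ i ∈ u, 0 ≤ x i ∧ x i ≤ 1) → ∀ k : ℕ,
    ∑ s ∈ u.powersetCard k,
        Real.exp (t * ∑ j ∈ s, x j - t * k * ((∑ j ∈ u, x j) / (u.card : ℝ)))
      ≤ (u.card.choose k : ℝ) * Real.exp ((u.card : ℝ) * t ^ 2 / 8) := by
  intro u
  induction u using Finset.induction_on with
  | empty =>
    intro _ k
    cases k with
    | zero => simp
    | succ m =>
      rw [show (∅ : Finset ι).powersetCard (m + 1) = ∅ from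
        powersetCard_eq_empty.mpr (by simp)]
      simp
  | @insert a u ha IH =>
    intro hx k
    have hxu : ∀ i ∈ u, 0 ≤ x i ∧ x i ≤ 1 := fun i hi => hx i (mem_insert_of_mem hi)
    have hxa := hx a (mem_insert_self a u)
    set n := u.card with hn
    have hcard : (insert a u).card = n + 1 := card_insert_of_notMem ha
    cases k with
    | zero =>
      rw [powersetCard_zero]
      simp only [sum_singleton, sum_empty, Nat.cast_zero, Nat.choose_zero_right, Nat.cast_one,
        one_mul]
      rw [mul_zero, zero_mul, zero_sub, neg_zero, Real.exp_zero]
      exact Real.one_le_exp (by positivity)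
    | succ m =>
      set k := m + 1 with hk
      by_cases hkn : n + 1 < k
      · rw [show (insert a u).powersetCard k = ∅ from
          powersetCard_eq_empty.mpr (by rw [hcard]; exact hkn)]
        simp only [sum_empty]
        positivity
      push_neg at hkn
      -- abbreviations
      set S : ℝ := ∑ j ∈ u, x j with hS
      set μ : ℝ := S / (n : ℝ) with hμ
      have hSins : ∑ j ∈ insert a u, x j = x a + S := sum_insert ha
      have hnμ : (n : ℝ) * μ = S := by
        rcases Nat.eq_zero_or_pos n with h0 | h0
        · have hc0 : u.card = 0 := by rw [← hn]; exact h0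
          have hu0 : u = ∅ := card_eq_zero.mp hc0
          simp [hμ, hS, hu0]
        · rw [hμ]; field_simp
      have hμ0 : 0 ≤ μ := by
        rw [hμ]
        apply div_nonneg _ (Nat.cast_nonneg n)
        exact sum_nonneg fun i hi => (hxu i hi).1
      have hμ1 : μ ≤ 1 := by
        rcases Nat.eq_zero_or_pos n with h0 | h0
        · have hc0 : u.card = 0 := by rw [← hn]; exact h0
          have hu0 : u = ∅ := card_eq_zero.mp hc0
          simp [hμ, hS, hu0]
        · rw [hμ, div_le_one (by exact_mod_cast h0)]
          calc S ≤ ∑ _j ∈ u, (1:ℝ) := sum_le_sum fun i hi => (hxu i hi).2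
          _ = n := by simp [hn]
      set N : ℝ := (n : ℝ) + 1 with hN
      have hNpos : (0:ℝ) < N := by positivity
      set μh : ℝ := (x a + S) / N with hμh
      set d : ℝ := x a - μ with hd
      set p : ℝ := (k : ℝ) / N with hp
      have hp0 : 0 ≤ p := div_nonneg (Nat.cast_nonneg k) hNpos.le
      have hp1 : p ≤ 1 := by
        rw [hp, div_le_one hNpos, hN]
        exact_mod_cast hkn
      have hd1 : d ^ 2 ≤ 1 := by
        have h1 : -1 ≤ d := by rw [hd]; linarith [hxa.1]
        have h2 : d ≤ 1 := by rw [hd]; linarith [hxa.2]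
        nlinarith
      have hN0 : ((n : ℝ) + 1) ≠ 0 := by positivity
      clear_value S μ N μh d p
      -- split the sum
      rw [powersetCard_succ_insert ha m]
      have hdisj : Disjoint (powersetCard k u) ((powersetCard m u).image (insert a)) := by
        rw [disjoint_left]
        intro s hs hs'
        obtain ⟨hsub, _⟩ := mem_powersetCard.mp hs
        obtain ⟨t, ht, rfl⟩ := mem_image.mp hs'
        exact ha (hsub (mem_insert_self a t))
      rw [sum_union hdisj]
      have himg : ∀ s ∈ powersetCard m u, ∀ s' ∈ powersetCard m u,
          insert a s = insert a s' → s = s' := by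
        intro s hs s' hs' h
        have has : a ∉ s := fun h' => ha ((mem_powersetCard.mp hs).1 h')
        have has' : a ∉ s' := fun h' => ha ((mem_powersetCard.mp hs').1 h')
        rw [← erase_insert has, ← erase_insert has', h]
      rw [sum_image himg]
      rw [hcard, hSins]
      -- IH instances
      have IH1 := IH hxu k
      have IH2 := IH hxu m
      -- first sum
      have e1 : ∀ s ∈ powersetCard k u,
          Real.exp (t * ∑ j ∈ s, x j - t * (k : ℝ) * ((x a + S) / ((n + 1 : ℕ) : ℝ)))
            = Real.exp (-(p * (t * d))) * Real.exp (t * ∑ j ∈ s, x j - t * (k : ℝ) * μ) := by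
        intro s _
        rw [← Real.exp_add]
        congr 1
        rw [hp, hd, ← hnμ, hN]
        push_cast
        field_simp
        ring
      have A1 : ∑ s ∈ powersetCard k u,
          Real.exp (t * ∑ j ∈ s, x j - t * (k : ℝ) * ((x a + S) / ((n + 1 : ℕ) : ℝ)))
          ≤ Real.exp (-(p * (t * d))) * ((n.choose k : ℝ) * Real.exp ((n : ℝ) * t ^ 2 / 8)) := by
        rw [sum_congr rfl e1, ← mul_sum]
        exact mul_le_mul_of_nonneg_left IH1 (Real.exp_nonneg _)
      -- second sum
      have e2 : ∀ s ∈ powersetCard m u,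
          Real.exp (t * ∑ j ∈ insert a s, x j - t * (k : ℝ) * ((x a + S) / ((n + 1 : ℕ) : ℝ)))
            = Real.exp ((1 - p) * (t * d)) * Real.exp (t * ∑ j ∈ s, x j - t * (m : ℝ) * μ) := by
        intro s hs
        have has : a ∉ s := fun h' => ha ((mem_powersetCard.mp hs).1 h')
        rw [sum_insert has, ← Real.exp_add]
        congr 1
        have hkm : (k : ℝ) = (m : ℝ) + 1 := by rw [hk]; push_cast; ring
        rw [hp, hd, ← hnμ, hkm, hN]
        push_cast
        field_simp
        ring
      have A2 : ∑ s ∈ powersetCard m u,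
          Real.exp (t * ∑ j ∈ insert a s, x j - t * (k : ℝ) * ((x a + S) / ((n + 1 : ℕ) : ℝ)))
          ≤ Real.exp ((1 - p) * (t * d)) * ((n.choose m : ℝ) * Real.exp ((n : ℝ) * t ^ 2 / 8)) := by
        rw [sum_congr rfl e2, ← mul_sum]
        exact mul_le_mul_of_nonneg_left IH2 (Real.exp_nonneg _)
      -- binomial identities over ℝ
      set C : ℝ := ((n + 1).choose k : ℝ) with hC
      have hC2 : (n.choose m : ℝ) * N = C * (k : ℝ) := by
        have hsm : (n + 1) * n.choose m = (n + 1).choose k * k := by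
          rw [hk]; simpa [Nat.succ_eq_add_one] using Nat.add_one_mul_choose_eq n m
        rw [hC, hN]
        have hsmR : ((n:ℝ) + 1) * (n.choose m : ℝ) = ((n+1).choose k : ℝ) * (k : ℝ) := by
          exact_mod_cast hsm
        linarith [hsmR]
      have hCm : (n.choose m : ℝ) = C * p := by
        have h3 : (n.choose m : ℝ) = C * (k : ℝ) / N := by
          rw [eq_div_iff hNpos.ne', hC2]
        rw [h3, hp]; ring
      have hCk : (n.choose k : ℝ) = C * (1 - p) := by
        have hpas : (n + 1).choose k = n.choose m + n.choose k := by
          rw [hk]; exact Nat.choose_succ_succ n m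
        have h4 : C = (n.choose m : ℝ) + (n.choose k : ℝ) := by
          rw [hC]; exact_mod_cast hpas
        linear_combination -h4 - hCm
      -- combine
      set E : ℝ := Real.exp ((n : ℝ) * t ^ 2 / 8) with hE
      have hEpos : 0 < E := Real.exp_pos _
      have hCnn : 0 ≤ C := Nat.cast_nonneg _
      clear_value C E
      have htp : Real.exp ((t * d) ^ 2 / 8) ≤ Real.exp (t ^ 2 / 8) := by
        apply Real.exp_le_exp.mpr
        have : (t * d) ^ 2 = t ^ 2 * d ^ 2 := by ring
        rw [this]
        have h5 : t ^ 2 * d ^ 2 ≤ t ^ 2 * 1 := mul_le_mul_of_nonneg_left hd1 (sq_nonneg t)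
        linarith
      have hfin : Real.exp (-(p * (t * d))) * ((n.choose k : ℝ) * E)
            + Real.exp ((1 - p) * (t * d)) * ((n.choose m : ℝ) * E)
          ≤ C * Real.exp (((n + 1 : ℕ) : ℝ) * t ^ 2 / 8) := by
        have h2p := two_point p hp0 hp1 (t * d)
        have hchain : Real.exp (-(p * (t * d))) * ((n.choose k : ℝ) * E)
              + Real.exp ((1 - p) * (t * d)) * ((n.choose m : ℝ) * E)
            = (C * E) * ((1 - p) * Real.exp (-(p * (t * d)))
                + p * Real.exp ((1 - p) * (t * d))) := by
          rw [hCk, hCm]; ring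
        rw [hchain]
        calc (C * E) * ((1 - p) * Real.exp (-(p * (t * d))) + p * Real.exp ((1 - p) * (t * d)))
            ≤ (C * E) * Real.exp ((t * d) ^ 2 / 8) :=
              mul_le_mul_of_nonneg_left h2p (by positivity)
          _ ≤ (C * E) * Real.exp (t ^ 2 / 8) :=
              mul_le_mul_of_nonneg_left htp (by positivity)
          _ = C * Real.exp (((n + 1 : ℕ) : ℝ) * t ^ 2 / 8) := by
              rw [hE, mul_assoc, ← Real.exp_add]
              congr 2
              push_cast
              ring
      calc _ ≤ Real.exp (-(p * (t * d))) * ((n.choose k : ℝ) * E)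
            + Real.exp ((1 - p) * (t * d)) * ((n.choose m : ℝ) * E) := add_le_add A1 A2
        _ ≤ C * Real.exp (((n + 1 : ℕ) : ℝ) * t ^ 2 / 8) := hfin
        _ = _ := by rw [hC]

lemma card_filter_mem_pkc {ι : Type*} [DecidableEq ι] (u : Finset ι) (m : ℕ) (j : ι)
    (hj : j ∈ u) :
    ((u.powersetCard (m + 1)).filter fun s => j ∈ s).card = (u.card - 1).choose m := by
  have h1 : ((u.powersetCard (m + 1)).filter fun s => j ∈ s).card
      = ((u.erase j).powersetCard m).card := by
    refine Finset.card_bij' (fun s _ => s.erase j) (fun s _ => insert j s) ?_ ?_ ?_ ?_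
    · intro s hs
      obtain ⟨hs1, hjs⟩ := mem_filter.mp hs
      obtain ⟨hsub, hcard⟩ := mem_powersetCard.mp hs1
      refine mem_powersetCard.mpr ⟨fun i hi => ?_, ?_⟩
      · obtain ⟨hij, hiu⟩ := mem_erase.mp hi
        exact mem_erase.mpr ⟨hij, hsub hiu⟩
      · rw [card_erase_of_mem hjs, hcard]
        omega
    · intro s hs
      obtain ⟨hsub, hcard⟩ := mem_powersetCard.mp hs
      have hjs : j ∉ s := fun h => (mem_erase.mp (hsub h)).1 rfl
      refine mem_filter.mpr ⟨mem_powersetCard.mpr ⟨?_, ?_⟩, mem_insert_self j s⟩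
      · intro i hi
        rcases mem_insert.mp hi with rfl | hi'
        · exact hj
        · exact (mem_erase.mp (hsub hi')).2
      · rw [card_insert_of_notMem hjs, hcard]
    · intro s hs
      exact insert_erase (mem_filter.mp hs).2
    · intro s hs
      obtain ⟨hsub, _⟩ := mem_powersetCard.mp hs
      have hjs : j ∉ s := fun h => (mem_erase.mp (hsub h)).1 rfl
      exact erase_insert hjs
  rw [h1, card_powersetCard, card_erase_of_mem hj]

lemma sum_pkc_sum {ι : Type*} [DecidableEq ι] (u : Finset ι) (m : ℕ) (f : ι → ℝ) :
    ∑ s ∈ u.powersetCard (m + 1), ∑ j ∈ s, f j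
      = ((u.card - 1).choose m : ℝ) * ∑ j ∈ u, f j := by
  have h1 : ∀ s ∈ u.powersetCard (m + 1), ∑ j ∈ s, f j
      = ∑ j ∈ u, if j ∈ s then f j else 0 := by
    intro s hs
    rw [← sum_filter]
    congr 1
    rw [filter_mem_eq_inter, inter_eq_right.mpr (mem_powersetCard.mp hs).1]
  rw [sum_congr rfl h1, sum_comm]
  rw [mul_sum]
  apply sum_congr rfl
  intro j hj
  rw [← sum_filter, sum_const, card_filter_mem_pkc u m j hj, nsmul_eq_mul]

set_option maxHeartbeats 1000000 in
theorem fastgae_threshold_guarantees_confidence_frobenius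
    (n : ℕ) (hn : 1 ≤ n)
    (α : ℝ) (hα0 : 0 < α) (hα1 : α < 1)
    (γ : ℝ) (hγ : 0 < γ)
    (ℓ : Fin n → ℝ) (hℓ : ∀ j, 0 ≤ ℓ j ∧ ℓ j ≤ 1)
    (nS : ℕ) (h1 : 1 ≤ nS) (h2 : nS ≤ n)
    (hthr : (nS : ℝ) ≥ Real.sqrt (n : ℝ) *
        Real.sqrt ((-Real.log (α / 2)) / (2 * γ ^ 2))) :
    let 𝒮 := Finset.powersetCard nS (Finset.univ : Finset (Fin n))
    let Lv : Finset (Fin n) → ℝ := fun s => (1 / (nS : ℝ)) * ∑ j ∈ s, ℓ j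
    let EL : ℝ := (∑ s ∈ 𝒮, Lv s) / (𝒮.card : ℝ)
    ((𝒮.filter fun s => γ ≤ |Lv s - EL|).card : ℝ) / (𝒮.card : ℝ) ≤ α := by
  intro 𝒮 Lv EL
  have h𝒮 : 𝒮 = Finset.powersetCard nS (Finset.univ : Finset (Fin n)) := rfl
  have hLv : ∀ s, Lv s = (1 / (nS : ℝ)) * ∑ j ∈ s, ℓ j := fun s => rfl
  have hEL : EL = (∑ s ∈ 𝒮, Lv s) / (𝒮.card : ℝ) := rfl
  obtain ⟨m, hm⟩ : ∃ m, nS = m + 1 := ⟨nS - 1, by omega⟩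
  have hn0 : (0:ℝ) < n := by exact_mod_cast hn
  have hk0 : (0:ℝ) < (nS:ℝ) := by exact_mod_cast h1
  have hucard : (Finset.univ : Finset (Fin n)).card = n := by simp
  have hcardS : 𝒮.card = n.choose nS := by
    rw [h𝒮, card_powersetCard, hucard]
  have hchoosepos : 0 < n.choose nS := Nat.choose_pos h2
  have hSpos : (0:ℝ) < (𝒮.card : ℝ) := by
    rw [hcardS]; exact_mod_cast hchoosepos
  set T : ℝ := ∑ j : Fin n, ℓ j with hT
  set μ : ℝ := T / n with hμ
  -- EL = μ
  have hsumsum : ∑ s ∈ 𝒮, ∑ j ∈ s, ℓ j = ((n-1).choose m : ℝ) * T := by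
    rw [h𝒮, hm, sum_pkc_sum, hucard, hT]
  have hid : (n:ℝ) * ((n-1).choose m : ℝ) = (n.choose nS : ℝ) * (nS:ℝ) := by
    have h6 := Nat.add_one_mul_choose_eq (n-1) m
    rw [Nat.sub_add_cancel hn] at h6
    rw [hm]
    exact_mod_cast h6
  have hELμ : EL = μ := by
    have h5 : ∑ s ∈ 𝒮, Lv s = (1/(nS:ℝ)) * (((n-1).choose m : ℝ) * T) := by
      rw [← hsumsum, mul_sum]
    rw [hEL, h5, hμ, hcardS]
    field_simp
    linear_combination T * hid
  -- MGF bound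
  have hmgf : ∀ t : ℝ, ∑ s ∈ 𝒮, Real.exp (t * ∑ j ∈ s, ℓ j - t * (nS:ℝ) * μ)
      ≤ (n.choose nS : ℝ) * Real.exp ((n:ℝ) * t ^ 2 / 8) := by
    intro t
    have h7 := mgf_wor ℓ t Finset.univ (fun i _ => hℓ i) nS
    rw [hucard] at h7
    rw [h𝒮, hμ, hT]
    exact h7
  -- the Chernoff parameter
  set t : ℝ := 4 * (nS:ℝ) * γ / n with ht
  have ht0 : 0 ≤ t := by positivity
  set B : ℝ := (n.choose nS : ℝ) * Real.exp (-(2 * (nS:ℝ)^2 * γ^2 / n)) with hB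
  have hBexp : (n.choose nS : ℝ) * Real.exp ((n:ℝ) * t ^ 2 / 8)
      = B * Real.exp (t * ((nS:ℝ) * γ)) := by
    rw [hB, mul_assoc, ← Real.exp_add, ht]
    congr 2
    field_simp
    ring
  -- tail bounds
  have tailbound : ∀ (τ : ℝ), τ ^ 2 = t ^ 2 → ∀ (P : Finset (Fin n) → Prop),
      (∀ s ∈ 𝒮, P s → t * ((nS:ℝ) * γ) ≤ τ * ∑ j ∈ s, ℓ j - τ * (nS:ℝ) * μ) →
      ((𝒮.filter P).card : ℝ) ≤ B := by
    intro τ hτsq P hP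
    have hposE : (0:ℝ) < Real.exp (t * ((nS:ℝ) * γ)) := Real.exp_pos _
    rw [← mul_le_mul_iff_of_pos_right hposE]
    calc ((𝒮.filter P).card : ℝ) * Real.exp (t * ((nS:ℝ) * γ))
        = ∑ _s ∈ 𝒮.filter P, Real.exp (t * ((nS:ℝ) * γ)) := by
          rw [sum_const, nsmul_eq_mul]
      _ ≤ ∑ s ∈ 𝒮.filter P, Real.exp (τ * ∑ j ∈ s, ℓ j - τ * (nS:ℝ) * μ) := by
          apply sum_le_sum
          intro s hs
          obtain ⟨hs𝒮, hPs⟩ := mem_filter.mp hs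
          exact Real.exp_le_exp.mpr (hP s hs𝒮 hPs)
      _ ≤ ∑ s ∈ 𝒮, Real.exp (τ * ∑ j ∈ s, ℓ j - τ * (nS:ℝ) * μ) :=
          sum_le_sum_of_subset_of_nonneg (filter_subset _ _)
            (fun s _ _ => Real.exp_nonneg _)
      _ ≤ (n.choose nS : ℝ) * Real.exp ((n:ℝ) * τ ^ 2 / 8) := hmgf τ
      _ = B * Real.exp (t * ((nS:ℝ) * γ)) := by rw [hτsq]; exact hBexp
  -- split the event
  have hsplit : (𝒮.filter fun s => γ ≤ |Lv s - EL|) ⊆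
      (𝒮.filter fun s => (nS:ℝ) * γ ≤ ∑ j ∈ s, ℓ j - (nS:ℝ) * μ) ∪
      (𝒮.filter fun s => ∑ j ∈ s, ℓ j - (nS:ℝ) * μ ≤ -((nS:ℝ) * γ)) := by
    intro s hs
    obtain ⟨hs𝒮, habs⟩ := mem_filter.mp hs
    have hLvEL : Lv s - EL = (∑ j ∈ s, ℓ j - (nS:ℝ) * μ) / (nS:ℝ) := by
      rw [hLv s, hELμ]
      field_simp
    have habs' : (nS:ℝ) * γ ≤ |∑ j ∈ s, ℓ j - (nS:ℝ) * μ| := by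
      rw [hLvEL, abs_div, abs_of_pos hk0, le_div_iff₀ hk0] at habs
      linarith [habs]
    rcases le_abs.mp habs' with h | h
    · exact mem_union_left _ (mem_filter.mpr ⟨hs𝒮, h⟩)
    · exact mem_union_right _ (mem_filter.mpr ⟨hs𝒮, by linarith⟩)
  -- apply tail bounds
  have hup : ((𝒮.filter fun s => (nS:ℝ) * γ ≤ ∑ j ∈ s, ℓ j - (nS:ℝ) * μ).card : ℝ) ≤ B := by
    apply tailbound t rfl
    intro s _ hPs
    have h8 : t * ((nS:ℝ) * γ) ≤ t * (∑ j ∈ s, ℓ j - (nS:ℝ) * μ) :=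
      mul_le_mul_of_nonneg_left hPs ht0
    nlinarith [h8]
  have hdown : ((𝒮.filter fun s => ∑ j ∈ s, ℓ j - (nS:ℝ) * μ ≤ -((nS:ℝ) * γ)).card : ℝ) ≤ B := by
    apply tailbound (-t) (by ring)
    intro s _ hPs
    have h8 : t * (∑ j ∈ s, ℓ j - (nS:ℝ) * μ) ≤ t * (-((nS:ℝ) * γ)) :=
      mul_le_mul_of_nonneg_left hPs ht0
    nlinarith [h8]
  -- exp bound from the threshold hypothesis
  have hαhalf : (0:ℝ) < α / 2 := by linarith
  have hlog : 0 ≤ -Real.log (α / 2) := by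
    have := Real.log_nonpos (by linarith) (by linarith : α / 2 ≤ 1)
    linarith
  set c : ℝ := (-Real.log (α / 2)) / (2 * γ ^ 2) with hc
  have hc0 : 0 ≤ c := by positivity
  have hk2 : (n:ℝ) * c ≤ (nS:ℝ) ^ 2 := by
    have hs1 : Real.sqrt ((n:ℝ) * c) ≤ (nS:ℝ) := by
      rw [Real.sqrt_mul (le_of_lt hn0) c]
      exact hthr
    calc (n:ℝ) * c = Real.sqrt ((n:ℝ) * c) ^ 2 :=
          (Real.sq_sqrt (mul_nonneg (le_of_lt hn0) hc0)).symm
      _ ≤ (nS:ℝ) ^ 2 := by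
          apply pow_le_pow_left₀ (Real.sqrt_nonneg _) hs1
  have hexp : Real.exp (-(2 * (nS:ℝ)^2 * γ^2 / n)) ≤ α / 2 := by
    have h9 : -Real.log (α / 2) ≤ 2 * (nS:ℝ)^2 * γ^2 / n := by
      have h10 : c * (2 * γ ^ 2) = -Real.log (α / 2) := by
        rw [hc]; field_simp
      rw [← h10]
      have h12 : c ≤ (nS:ℝ)^2 / n := by
        rw [le_div_iff₀ hn0]; linarith [hk2]
      have h13 := mul_le_mul_of_nonneg_right h12 (by positivity : (0:ℝ) ≤ 2*γ^2)
      calc c * (2 * γ ^ 2) ≤ (nS:ℝ)^2 / n * (2 * γ ^ 2) := h13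
        _ = 2 * (nS:ℝ)^2 * γ^2 / n := by ring
    calc Real.exp (-(2 * (nS:ℝ)^2 * γ^2 / n)) ≤ Real.exp (Real.log (α / 2)) := by
          apply Real.exp_le_exp.mpr
          linarith
      _ = α / 2 := Real.exp_log hαhalf
  have hBle : B ≤ (n.choose nS : ℝ) * (α / 2) := by
    rw [hB]
    exact mul_le_mul_of_nonneg_left hexp (Nat.cast_nonneg _)
  -- combine
  rw [div_le_iff₀ hSpos]
  have hcards : ((𝒮.filter fun s => γ ≤ |Lv s - EL|).card : ℝ)
      ≤ ((𝒮.filter fun s => (nS:ℝ) * γ ≤ ∑ j ∈ s, ℓ j - (nS:ℝ) * μ).card : ℝ)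
        + ((𝒮.filter fun s => ∑ j ∈ s, ℓ j - (nS:ℝ) * μ ≤ -((nS:ℝ) * γ)).card : ℝ) := by
    have := card_le_card hsplit
    have h11 := card_union_le
      (𝒮.filter fun s => (nS:ℝ) * γ ≤ ∑ j ∈ s, ℓ j - (nS:ℝ) * μ)
      (𝒮.filter fun s => ∑ j ∈ s, ℓ j - (nS:ℝ) * μ ≤ -((nS:ℝ) * γ))
    push_cast
    exact_mod_cast le_trans this h11
  calc ((𝒮.filter fun s => γ ≤ |Lv s - EL|).card : ℝ)
      ≤ _ + _ := hcards
    _ ≤ B + B := add_le_add hup hdown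
    _ ≤ (n.choose nS : ℝ) * (α / 2) + (n.choose nS : ℝ) * (α / 2) := add_le_add hBle hBle
    _ = α * (n.choose nS : ℝ) := by ring
    _ = α * (𝒮.card : ℝ) := by rw [hcardS]
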